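/- Let n ≥ 1 and let τ(z) = Σ_{k≥0} t_{k-n} z^k with nonnegative coefficients, t_{-n} > 0, τ(1) = 1, and suppose the derivative of z ↦ τ(z)^{1/n} is increasing on (0,1). If Σ_{k≥1} k t_{k-n} ≤ n, then the equation z^n = τ(z) has no root in the open interval (0,1). -/

import Mathlib

/-- Lemma 3 (a₁): if `τ(1) = 1` and `τ'(1) ≤ n`, then `z^n = τ(z)` has no root in `(0,1)`,
assuming the derivative of `τ(z)^{1/n}` is increasing on `(0,1)`. -/
theorem stmt6 (n : ℕ) (hn : 1 ≤ n) (a : ℕ → ℝ) (ha : ∀ k, 0 ≤ a k) (ha0 : 0 < a 0)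
    (hsa : Summable a) (hτ1 : (∑' k : ℕ, a k) = 1)
    (hderiv : StrictMonoOn
      (deriv fun z : ℝ => (∑' k : ℕ, a k * z ^ k) ^ ((n : ℝ)⁻¹)) (Set.Ioo 0 1))
    (hm : Summable fun k : ℕ => (k : ℝ) * a k)
    (hmom : (∑' k : ℕ, (k : ℝ) * a k) ≤ n) :
    ¬ ∃ z ∈ Set.Ioo (0 : ℝ) 1, z ^ n = ∑' k : ℕ, a k * z ^ k := by
  rintro ⟨z₀, hz₀, hroot⟩
  set f : ℝ → ℝ := fun z => ∑' k : ℕ, a k * z ^ k with hf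
  set g : ℝ → ℝ := fun z => f z ^ ((n : ℝ)⁻¹) with hg
  have hnpos : (0 : ℝ) < n := by exact_mod_cast hn
  -- summability on [-1,1]
  have hsum : ∀ z : ℝ, |z| ≤ 1 → Summable (fun k : ℕ => a k * z ^ k) := by
    intro z hz
    refine Summable.of_norm_bounded hsa fun k => ?_
    rw [norm_mul, norm_pow, Real.norm_eq_abs, Real.norm_eq_abs, abs_of_nonneg (ha k)]
    calc a k * |z| ^ k ≤ a k * 1 ^ k := by
          exact mul_le_mul_of_nonneg_left (pow_le_pow_left₀ (abs_nonneg z) hz k) (ha k)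
      _ = a k := by simp
  -- f 1 = 1
  have hf1 : f 1 = 1 := by simp [hf, hτ1]
  -- f z ≥ a 0 for z ∈ [0,1]
  have hflb : ∀ z : ℝ, 0 ≤ z → z ≤ 1 → a 0 ≤ f z := by
    intro z hz0 hz1
    have : a 0 * z ^ 0 ≤ f z :=
      Summable.le_tsum (hsum z (by rw [abs_of_nonneg hz0]; exact hz1)) 0 fun k _ =>
        mul_nonneg (ha k) (pow_nonneg hz0 k)
    simpa using this
  -- f z ≤ 1 for z ∈ [0,1]
  have hfub : ∀ z : ℝ, 0 ≤ z → z ≤ 1 → f z ≤ 1 := by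
    intro z hz0 hz1
    rw [← hτ1]
    refine Summable.tsum_le_tsum (fun k => ?_) (hsum z (by rw [abs_of_nonneg hz0]; exact hz1)) hsa
    calc a k * z ^ k ≤ a k * 1 ^ k := by
          exact mul_le_mul_of_nonneg_left (pow_le_pow_left₀ hz0 hz1 k) (ha k)
      _ = a k := by simp
  -- continuity of f on [0,1]
  have hfc : ContinuousOn f (Set.Icc 0 1) := by
    refine continuousOn_tsum (fun k => (continuous_pow k).continuousOn.const_smul (a k)) hsa
      fun k x hx => ?_
    rw [norm_mul, norm_pow, Real.norm_eq_abs, Real.norm_eq_abs, abs_of_nonneg (ha k),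
      abs_of_nonneg hx.1]
    calc a k * x ^ k ≤ a k * 1 ^ k := by
          exact mul_le_mul_of_nonneg_left (pow_le_pow_left₀ hx.1 hx.2 k) (ha k)
      _ = a k := by simp
  -- derivative of f on (-1,1)
  set D : ℝ → ℝ := fun z => ∑' k : ℕ, a k * (k * z ^ (k - 1)) with hD
  have hfd : ∀ z ∈ Set.Ioo (-1 : ℝ) 1, HasDerivAt f (D z) z := by
    intro z hz
    have := hasDerivAt_tsum_of_isPreconnected (𝕜 := ℝ) (u := fun k : ℕ => (k : ℝ) * a k)
      (g := fun (k : ℕ) (z : ℝ) => a k * z ^ k)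
      (g' := fun (k : ℕ) (z : ℝ) => a k * ((k : ℝ) * z ^ (k - 1)))
      hm isOpen_Ioo isPreconnected_Ioo ?_ ?_ (by norm_num : (0:ℝ) ∈ Set.Ioo (-1:ℝ) 1)
      (hsum 0 (by norm_num)) hz
    · exact this
    · intro k y _
      simpa using (hasDerivAt_pow k y).const_mul (a k)
    · intro k y hy
      rw [norm_mul, norm_mul, Real.norm_eq_abs, Real.norm_eq_abs, Real.norm_eq_abs,
        abs_of_nonneg (ha k), Nat.abs_cast, abs_pow]
      calc a k * ((k : ℝ) * |y| ^ (k - 1)) ≤ a k * ((k : ℝ) * 1 ^ (k - 1)) := by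
            have : |y| ≤ 1 := by
              rw [abs_le]; exact ⟨hy.1.le, hy.2.le⟩
            exact mul_le_mul_of_nonneg_left
              (mul_le_mul_of_nonneg_left (pow_le_pow_left₀ (abs_nonneg y) this _) (Nat.cast_nonneg k : (0:ℝ) ≤ k))
              (ha k)
        _ = (k : ℝ) * a k := by rw [one_pow]; ring
  -- D z ≤ n on [0,1]
  have hDub : ∀ z : ℝ, 0 ≤ z → z ≤ 1 → D z ≤ n := by
    intro z hz0 hz1
    have hsumD : Summable fun k : ℕ => a k * ((k : ℝ) * z ^ (k - 1)) := by
      refine Summable.of_norm_bounded hm fun k => ?_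
      rw [norm_mul, norm_mul, Real.norm_eq_abs, Real.norm_eq_abs, Real.norm_eq_abs,
        abs_of_nonneg (ha k), Nat.abs_cast, abs_pow, abs_of_nonneg hz0]
      calc a k * ((k:ℝ) * z ^ (k-1)) ≤ a k * ((k:ℝ) * 1 ^ (k-1)) :=
            mul_le_mul_of_nonneg_left
              (mul_le_mul_of_nonneg_left (pow_le_pow_left₀ hz0 hz1 _) (Nat.cast_nonneg k : (0:ℝ) ≤ k)) (ha k)
        _ = (k:ℝ) * a k := by rw [one_pow]; ring
    refine le_trans ?_ hmom
    refine Summable.tsum_le_tsum (fun k => ?_) hsumD hm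
    calc a k * ((k:ℝ) * z ^ (k-1)) ≤ a k * ((k:ℝ) * 1 ^ (k-1)) :=
          mul_le_mul_of_nonneg_left
            (mul_le_mul_of_nonneg_left (pow_le_pow_left₀ hz0 hz1 _) (Nat.cast_nonneg k : (0:ℝ) ≤ k)) (ha k)
      _ = (k:ℝ) * a k := by rw [one_pow]; ring
  -- derivative of g on (0,1)
  set G : ℝ → ℝ := fun z => D z * (n : ℝ)⁻¹ * f z ^ ((n : ℝ)⁻¹ - 1) with hG
  have hgd : ∀ z ∈ Set.Ioo (0 : ℝ) 1, HasDerivAt g (G z) z := by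
    intro z hz
    have h1 : HasDerivAt f (D z) z := hfd z ⟨by linarith [hz.1], hz.2⟩
    have h2 : f z ≠ 0 := ne_of_gt (lt_of_lt_of_le ha0 (hflb z hz.1.le hz.2.le))
    exact h1.rpow_const (Or.inl h2)
  have hderivg : ∀ z ∈ Set.Ioo (0 : ℝ) 1, deriv g z = G z := fun z hz => (hgd z hz).deriv
  -- g z₀ = z₀
  have hz₀n : f z₀ = z₀ ^ n := hroot.symm
  have hgz₀ : g z₀ = z₀ := by
    rw [hg]
    simp only
    rw [hz₀n, ← Real.rpow_natCast z₀ n, ← Real.rpow_mul hz₀.1.le,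
      mul_inv_cancel₀ (ne_of_gt hnpos), Real.rpow_one]
  -- g 1 = 1
  have hg1 : g 1 = 1 := by rw [hg]; simp only; rw [hf1, Real.one_rpow]
  -- continuity of g on [0,1]
  have hgc : ContinuousOn g (Set.Icc 0 1) := by
    refine hfc.rpow_const fun x hx => Or.inr (by positivity)
  -- MVT on [z₀, 1]
  obtain ⟨c, hc, hceq⟩ := exists_hasDerivAt_eq_slope g G hz₀.2
    (hgc.mono (Set.Icc_subset_Icc hz₀.1.le le_rfl))
    (fun x hx => hgd x ⟨lt_trans hz₀.1 hx.1, hx.2⟩)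
  have hGc : G c = 1 := by
    rw [hceq, hgz₀, hg1]
    rw [div_self (by linarith [hz₀.2] : (1:ℝ) - z₀ ≠ 0)]
  have hcI : c ∈ Set.Ioo (0 : ℝ) 1 := ⟨lt_trans hz₀.1 hc.1, hc.2⟩
  -- c' between c and 1
  set c' : ℝ := (c + 1) / 2 with hc'
  have hc'I : c' ∈ Set.Ioo (0 : ℝ) 1 := ⟨by nlinarith [hcI.1, hcI.2], by nlinarith [hcI.2]⟩
  have hcc' : c < c' := by rw [hc']; linarith [hcI.2]
  have hGc' : 1 < G c' := by
    have := hderiv hcI hc'I hcc'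
    rw [hderivg c hcI, hderivg c' hc'I] at this
    rw [← hGc]; exact this
  -- for z ∈ (c', 1), G z > G c' and G z ≤ f z ^ ((n:ℝ)⁻¹ - 1)
  have key : ∀ z ∈ Set.Ioo c' (1 : ℝ), G c' ≤ f z ^ ((n : ℝ)⁻¹ - 1) := by
    intro z hz
    have hzI : z ∈ Set.Ioo (0 : ℝ) 1 := ⟨lt_trans hc'I.1 hz.1, hz.2⟩
    have h1 : G c' < G z := by
      have := hderiv hc'I hzI hz.1
      rw [hderivg c' hc'I, hderivg z hzI] at this; exact this
    have hfpos : 0 < f z := lt_of_lt_of_le ha0 (hflb z hzI.1.le hzI.2.le)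
    have h2 : G z ≤ f z ^ ((n : ℝ)⁻¹ - 1) := by
      rw [hG]
      have hD1 : D z * (n : ℝ)⁻¹ ≤ 1 := by
        rw [← le_div_iff₀ (by positivity : (0:ℝ) < (n:ℝ)⁻¹)]
        simpa [one_div, inv_inv] using hDub z hzI.1.le hzI.2.le
      calc D z * (n : ℝ)⁻¹ * f z ^ ((n : ℝ)⁻¹ - 1)
          ≤ 1 * f z ^ ((n : ℝ)⁻¹ - 1) :=
            mul_le_mul_of_nonneg_right hD1 (Real.rpow_nonneg hfpos.le _)
        _ = f z ^ ((n : ℝ)⁻¹ - 1) := one_mul _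
    linarith
  -- take the limit z → 1⁻
  have hflim : Filter.Tendsto f (nhdsWithin 1 (Set.Iio 1)) (nhds 1) := by
    have h1 : Filter.Tendsto f (nhdsWithin 1 (Set.Icc 0 1)) (nhds 1) := by
      have := hfc 1 (by norm_num)
      rw [ContinuousWithinAt] at this
      rwa [hf1] at this
    refine h1.mono_left ?_
    rw [← nhdsWithin_Ioo_eq_nhdsLT (show (0:ℝ) < 1 by norm_num)]
    exact nhdsWithin_mono 1 Set.Ioo_subset_Icc_self
  have hFlim : Filter.Tendsto (fun z => f z ^ ((n : ℝ)⁻¹ - 1)) (nhdsWithin 1 (Set.Iio 1))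
      (nhds 1) := by
    have := hflim.rpow_const (p := (n : ℝ)⁻¹ - 1) (Or.inl one_ne_zero)
    rwa [Real.one_rpow] at this
  have hev : ∀ᶠ z in nhdsWithin 1 (Set.Iio 1), G c' ≤ f z ^ ((n : ℝ)⁻¹ - 1) := by
    filter_upwards [Ioo_mem_nhdsLT hc'I.2] with z hz using key z hz
  have : G c' ≤ 1 := ge_of_tendsto hFlim hev
  linarith
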